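/- arXiv:math/0211433 — 2 statements merged into one kernel-verified Lean document; each statement's English description precedes it below -/
import Mathlib

section
/- Let κ be a singular cardinal with cf(κ) = δ ≥ ℵ₁. Let (κ_i | i < δ) be a strictly increasing and continuous sequence of cardinals cofinal in κ with 2^δ ≤ κ₀ < κ. Let δ ≤ λ < κ, let θ > κ be regular, let Φ be a function from [H_θ]^λ to the nonstationary ideal on δ, and let S ⊆ [H_θ]^λ be stationary in [H_θ]^λ. Then there is a club C ⊆ δ such that for every function f ∈ ∏_{i ∈ C} κ_i⁺ there is some Y ≺ H_θ with Y ∈ S, C ∩ Φ(Y) = ∅, and f(κ_i⁺) < sup(Y ∩ κ_i⁺) for all i ∈ C. -/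
open Cardinal Set

noncomputable section

/-- `C` is a club (closed unbounded) subset of the ordinal `δ`. -/
def IsClubIn (C : Set Ordinal.{0}) (δ : Ordinal.{0}) : Prop :=
  C ⊆ Set.Iio δ ∧ (∀ a < δ, ∃ b ∈ C, a ≤ b) ∧
    ∀ a < δ, (∃ b ∈ C, b < a) → (∀ b < a, ∃ c ∈ C, b < c ∧ c < a) → a ∈ C

/-- `S` is a stationary subset of the ordinal `δ`. -/
def IsStatIn (S : Set Ordinal.{0}) (δ : Ordinal.{0}) : Prop :=
  ∀ C, IsClubIn C δ → (S ∩ C).Nonempty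

/-- The product `∏ A` of a set of cardinals: choice functions picking an
ordinal below each member of `A`. -/
def ProdSet (A : Set Cardinal.{0}) : Type 1 :=
  { f : ↥A → Ordinal.{0} // ∀ a : ↥A, f a < (a : Cardinal).ord }

/-- The least cardinality of a family that dominates every element with
respect to the relation `r` (the cofinality of the relation `r`). -/
def relCof {α : Type 1} (r : α → α → Prop) : Cardinal.{1} :=
  sInf { c : Cardinal.{1} | ∃ F : Set α, #(↥F) = c ∧ ∀ x, ∃ y ∈ F, r x y }

/-- Domination modulo an ultrafilter `D` on `A`, for elements of `∏ A`. -/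
def ltD {A : Set Cardinal.{0}} (D : Ultrafilter ↥A) (f g : ProdSet A) : Prop :=
  { a : ↥A | f.1 a < g.1 a } ∈ D

/-- `pcf A`: the set of possible cofinalities of ultraproducts `∏ A / D`. -/
def pcf (A : Set Cardinal.{0}) : Set Cardinal.{0} :=
  { c | ∃ D : Ultrafilter ↥A, Cardinal.lift.{1} c = relCof (ltD D) }

/-- `c` is the maximum of `pcf A`. -/
def IsMaxPcf (A : Set Cardinal.{0}) (c : Cardinal.{0}) : Prop :=
  c ∈ pcf A ∧ ∀ d ∈ pcf A, d ≤ c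

/-- Shelah's pseudopower `pp μ` of a (singular) cardinal `μ`. -/
def pp (μ : Cardinal.{0}) : Cardinal.{0} :=
  sSup { c : Cardinal.{0} | ∃ A : Set Cardinal.{0}, (∀ a ∈ A, a.IsRegular ∧ a < μ) ∧
      #(↥A) = Cardinal.lift.{1} μ.ord.cof ∧ (∀ b < μ, ∃ a ∈ A, b ≤ a) ∧
      ∃ D : Ultrafilter ↥A, (∀ b < μ, { a : ↥A | b < (a : Cardinal) } ∈ D) ∧
        Cardinal.lift.{1} c = relCof (ltD D) }

/-- A sequence of generators is smooth. -/
def IsSmooth (A : Set Cardinal.{0}) (b : Cardinal.{0} → Set Cardinal.{0}) : Prop :=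
  ∀ θ ∈ A, ∀ θ' ∈ b θ, b θ' ⊆ b θ

/-- A sequence of generators is closed: `b θ = A ∩ pcf (b θ)`. -/
def IsClosedGen (A : Set Cardinal.{0}) (b : Cardinal.{0} → Set Cardinal.{0}) : Prop :=
  ∀ θ ∈ A, b θ = A ∩ pcf (b θ)

/-- A sequence of generators: `J_{≤θ}(A) = J_{<θ}(A) + b θ` for all `θ ∈ A`. -/
def IsGenerating (A : Set Cardinal.{0}) (b : Cardinal.{0} → Set Cardinal.{0}) : Prop :=
  ∀ θ ∈ A, b θ ⊆ A ∧
    ∀ x ⊆ A, (∀ c ∈ pcf x, c ≤ θ) ↔ ∃ y ⊆ A, (∀ c ∈ pcf y, c < θ) ∧ x ⊆ y ∪ b θ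

/-- `κseq` is a strictly increasing continuous sequence of length `δ.ord`,
cofinal in `κ`, consisting of cardinals `< κ`. -/
def IsNiceSeq (δ : Cardinal.{0}) (κseq : Ordinal.{0} → Cardinal.{0}) (κ : Cardinal.{0}) : Prop :=
  (∀ i j, i < j → j < δ.ord → κseq i < κseq j) ∧
  (∀ i, i < δ.ord → Order.IsSuccLimit i → κseq i = ⨆ j : ↥(Set.Iio i), κseq j.1) ∧
  (∀ i, i < δ.ord → κseq i < κ) ∧
  (∀ c < κ, ∃ i, i < δ.ord ∧ c ≤ κseq i)

/-- `S ⊆ [H]^λ` is stationary: every structure on `H` with at most `λ` many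
functions has an "elementary substructure" (a closed subset) whose universe is in `S`. -/
def StatInPow (H : Set Ordinal.{0}) (lam : Cardinal.{0}) (S : Set (Set Ordinal.{0})) : Prop :=
  ∀ (ι : Type) (F : ι → List Ordinal → Ordinal), #ι ≤ lam →
    (∀ i l, (∀ x ∈ l, x ∈ H) → F i l ∈ H) →
    ∃ Y ∈ S, Y ⊆ H ∧ #(↥Y) = Cardinal.lift.{1} lam ∧
      ∀ i l, (∀ x ∈ l, x ∈ Y) → F i l ∈ Y

/-- Lemma 1.5 of the paper. -/
theorem stmt0 (κ δ lam θ : Cardinal.{0}) (κseq : Ordinal → Cardinal)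
    (hδreg : δ.IsRegular) (hδ : Cardinal.aleph 1 ≤ δ)
    (hsing : δ < κ) (hcf : κ.ord.cof = δ)
    (hseq : IsNiceSeq δ κseq κ)
    (h0 : 2 ^ δ ≤ κseq 0)
    (hlam1 : δ ≤ lam) (hlam2 : lam < κ)
    (hθreg : θ.IsRegular) (hθ : κ < θ)
    (S : Set (Set Ordinal))
    (hSsub : ∀ Y ∈ S, Y ⊆ Set.Iio θ.ord ∧ #(↥Y) = Cardinal.lift.{1} lam)
    (hS : StatInPow (Set.Iio θ.ord) lam S)
    (Φ : Set Ordinal → Set Ordinal)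
    (hΦ : ∀ Y, Φ Y ⊆ Set.Iio δ.ord ∧ ¬ IsStatIn (Φ Y) δ.ord) :
    ∃ C, IsClubIn C δ.ord ∧ ∀ f : Ordinal → Ordinal,
      (∀ i ∈ C, f i < (Order.succ (κseq i)).ord) →
      ∃ Y ∈ S, C ∩ Φ Y = ∅ ∧
        ∀ i ∈ C, f i < sSup (Y ∩ Set.Iio (Order.succ (κseq i)).ord) := by
    classical
  by_contra hcon
  push_neg at hcon
  -- choose a counterexample function for every club
  choose fc hfc1 hfc2 using hcon
  -- wrapper independent of the club proof
  set fC : Set Ordinal → Ordinal → Ordinal :=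
    fun C i => if h : IsClubIn C δ.ord then fc C h i else 0 with hfC
  have hfC1 : ∀ C (h : IsClubIn C δ.ord), ∀ i ∈ C, fC C i < (Order.succ (κseq i)).ord := by
    intro C h i hi
    simp only [hfC, dif_pos h]
    exact hfc1 C h i hi
  have hfC2 : ∀ C (h : IsClubIn C δ.ord), ∀ Y ∈ S, C ∩ Φ Y = ∅ →
      ∃ i ∈ C, sSup (Y ∩ Set.Iio (Order.succ (κseq i)).ord) ≤ fC C i := by
    intro C h Y hY hdisj
    have := hfc2 C h Y hY hdisj
    simpa only [hfC, dif_pos h] using this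
  -- basic facts
  have hδ0 : (0 : Ordinal) < δ.ord := by
    have h1 : (0:Cardinal) < δ := lt_of_lt_of_le (Cardinal.aleph_pos 1) hδ
    simpa using Cardinal.ord_lt_ord.2 h1
  have hinf : ∀ j < δ.ord, ℵ₀ ≤ κseq j := by
    intro j hj
    have h1 : ℵ₀ ≤ δ := le_trans (Cardinal.aleph0_le_aleph 1) hδ
    have h2 : δ ≤ 2 ^ δ := (Cardinal.cantor δ).le
    have h3 : κseq 0 ≤ κseq j := by
      rcases eq_or_lt_of_le (zero_le : (0 : Ordinal) ≤ j) with h | h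
      · exact le_of_eq (by rw [← h])
      · exact (hseq.1 0 j h hj).le
    exact le_trans h1 (le_trans h2 (le_trans h0 h3))
  have hreg : ∀ j < δ.ord, (Order.succ (κseq j)).IsRegular :=
    fun j hj => Cardinal.isRegular_succ (hinf j hj)
  have hslim : ∀ j < δ.ord, Order.IsSuccLimit ((Order.succ (κseq j)).ord) :=
    fun j hj => Cardinal.isSuccLimit_ord (le_trans (hinf j hj) (Order.le_succ _))
  have hsuccθ : ∀ j < δ.ord, (Order.succ (κseq j)).ord < θ.ord := by
    intro j hj
    exact Cardinal.ord_lt_ord.2 (lt_of_le_of_lt (Order.succ_le_of_lt (hseq.2.2.1 j hj)) hθ)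
  -- enumeration of Iio δ.ord by a small type
  set e : δ.ord.ToType → Ordinal := fun t => ((Ordinal.ToType.mk (o := δ.ord)).symm t : Set.Iio δ.ord).1 with he
  have he_lt : ∀ t, e t < δ.ord := fun t => ((Ordinal.ToType.mk (o := δ.ord)).symm t).2
  have he_surj : ∀ x < δ.ord, ∃ t, e t = x := by
    intro x hx
    refine ⟨Ordinal.ToType.mk (o := δ.ord) ⟨x, hx⟩, ?_⟩
    simp [he]
  set decode : Set (δ.ord.ToType) → Set Ordinal := fun s => e '' s with hdec
  have hdecode : ∀ C, IsClubIn C δ.ord → ∃ s, decode s = C := by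
    intro C hC
    refine ⟨e ⁻¹' C, ?_⟩
    apply Set.Subset.antisymm
    · rintro x ⟨t, ht, rfl⟩; exact ht
    · intro x hx
      obtain ⟨t, rfl⟩ := he_surj x (hC.1 hx)
      exact ⟨t, hx, rfl⟩
  -- the master dominating function
  set g : Ordinal → Ordinal := fun j => ⨆ s : Set (δ.ord.ToType),
      (if fC (decode s) j + 1 < (Order.succ (κseq j)).ord then fC (decode s) j + 1 else 0) with hg
  have hcard : #(Set (δ.ord.ToType)) < Order.succ (κseq 0) := by
    rw [Cardinal.mk_set, Cardinal.mk_toType, Cardinal.card_ord]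
    exact lt_of_le_of_lt h0 (Order.lt_succ _)
  have hg_lt : ∀ j < δ.ord, g j < (Order.succ (κseq j)).ord := by
    intro j hj
    apply Ordinal.iSup_lt_ord
    · rw [(hreg j hj).cof_eq]
      refine lt_of_lt_of_le hcard ?_
      have h3 : κseq 0 ≤ κseq j := by
        rcases eq_or_lt_of_le (zero_le : (0 : Ordinal) ≤ j) with h | h
        · exact le_of_eq (by rw [← h])
        · exact (hseq.1 0 j h hj).le
      exact Order.succ_le_succ h3
    · intro s
      split
      · assumption
      · exact (hslim j hj).pos
  have hg_bdd : ∀ j, BddAbove (Set.range fun s : Set (δ.ord.ToType) =>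
      (if fC (decode s) j + 1 < (Order.succ (κseq j)).ord then fC (decode s) j + 1 else 0)) := by
    intro j
    refine ⟨(Order.succ (κseq j)).ord, ?_⟩
    rintro x ⟨s, rfl⟩
    dsimp only
    split
    · exact le_of_lt (by assumption)
    · exact zero_le
  have hg_ge : ∀ C, IsClubIn C δ.ord → ∀ i ∈ C, fC C i + 1 ≤ g i := by
    intro C hC i hi
    obtain ⟨s, hs⟩ := hdecode C hC
    have hcond : fC C i + 1 < (Order.succ (κseq i)).ord := by
      rw [Ordinal.add_one_eq_succ]
      exact (hslim i (hC.1 hi)).succ_lt (hfC1 C hC i hi)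
    calc fC C i + 1 = (if fC (decode s) i + 1 < (Order.succ (κseq i)).ord
            then fC (decode s) i + 1 else 0) := by rw [hs, if_pos hcond]
      _ ≤ g i := le_ciSup (hg_bdd i) s
  -- apply stationarity with the structure of constants g ∘ e
  obtain ⟨Y, hYS, hYsub, hYcard, hYcl⟩ :=
    hS (δ.ord.ToType) (fun t _ => g (e t))
      (by rw [Cardinal.mk_toType, Cardinal.card_ord]; exact hlam1)
      (by intro t l _
          exact lt_trans (hg_lt (e t) (he_lt t)) (hsuccθ (e t) (he_lt t)))
  have hgY : ∀ j < δ.ord, g j ∈ Y := by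
    intro j hj
    obtain ⟨t, rfl⟩ := he_surj j hj
    exact hYcl t [] (by simp)
  -- get a club disjoint from Φ Y
  have hns := (hΦ Y).2
  unfold IsStatIn at hns
  push_neg at hns
  obtain ⟨C, hC, hCdisj⟩ := hns
  have hCdisj' : C ∩ Φ Y = ∅ := by
    rw [Set.inter_comm]
    exact hCdisj
  -- contradiction
  obtain ⟨i, hi, hle⟩ := hfC2 C hC Y hYS hCdisj'
  have hiδ : i < δ.ord := hC.1 hi
  have hmem : g i ∈ Y ∩ Set.Iio (Order.succ (κseq i)).ord :=
    ⟨hgY i hiδ, hg_lt i hiδ⟩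
  have hbdd : BddAbove (Y ∩ Set.Iio (Order.succ (κseq i)).ord) :=
    ⟨(Order.succ (κseq i)).ord, fun x hx => le_of_lt hx.2⟩
  have : fC C i + 1 ≤ fC C i := by
    calc fC C i + 1 ≤ g i := hg_ge C hC i hi
      _ ≤ sSup (Y ∩ Set.Iio (Order.succ (κseq i)).ord) := le_csSup hbdd hmem
      _ ≤ fC C i := hle
  exact absurd this (by simp)
end
end

section
/- Let κ be a singular strong limit cardinal of uncountable cofinality. If the set {α < κ | 2^α = α⁺} is co-stationary in κ, then the set {λ < κ | λ^{cf(λ)} > λ⁺ · 2^{cf(λ)}} is stationary in κ; i.e., SCH fails stationarily often below κ. -/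
open Cardinal Set

noncomputable section

/-- For a strong limit cardinal `l`, `2 ^ l ≤ l ^ cof l`. -/
lemma aux_two_power_le {l : Cardinal.{0}} (h : l.IsStrongLimit) :
    2 ^ l ≤ l ^ l.ord.cof := by
  obtain ⟨ι, f, hf, hι⟩ := Ordinal.exists_lsub_cof l.ord
  set g : ι → Cardinal.{0} := fun i => (f i).card with hg
  have hgl : ∀ i, g i < l := fun i => Cardinal.lt_ord.mp (hf ▸ Ordinal.lt_lsub f i)
  have hsum : l ≤ Cardinal.sum g := by
    refine le_trans ?_ (Cardinal.iSup_le_sum g)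
    by_contra hlt
    push_neg at hlt
    have h2 : Order.succ (⨆ i, g i) < l :=
      lt_of_le_of_lt (Order.succ_le_of_lt (Cardinal.cantor _)) (h.two_power_lt hlt)
    have h3 : (Order.succ (⨆ i, g i)).ord < Ordinal.lsub f := by
      rw [hf]; exact Cardinal.ord_lt_ord.2 h2
    obtain ⟨i, hi⟩ := Ordinal.lt_lsub_iff.mp h3
    have h4 : Order.succ (⨆ i, g i) ≤ g i := by
      have := Ordinal.card_le_card hi
      rwa [Cardinal.card_ord] at this
    exact (Order.lt_succ (⨆ i, g i)).not_ge
      (h4.trans (le_ciSup (Cardinal.bddAbove_range g) i))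
  calc 2 ^ l ≤ 2 ^ Cardinal.sum g := Cardinal.power_le_power_left two_ne_zero hsum
    _ = Cardinal.prod fun i => 2 ^ g i := Cardinal.power_sum 2 g
    _ ≤ Cardinal.prod fun _ : ι => l :=
        Cardinal.prod_le_prod _ _ fun i => (h.two_power_lt (hgl i)).le
    _ = l ^ #ι := Cardinal.prod_const' ι l
    _ = l ^ l.ord.cof := by rw [hι]

/-- Strong limit cardinals are unbounded below a strong limit `κ` of
uncountable cofinality. -/
lemma aux_exists_strongLimit {κ : Cardinal.{0}} (hsl : κ.IsStrongLimit)
    (hucf : ℵ₀ < κ.ord.cof) {a : Ordinal.{0}} (ha : a < κ.ord) :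
    ∃ μ : Cardinal.{0}, μ.IsStrongLimit ∧ a < μ.ord ∧ μ.ord < κ.ord := by
  have haleph : ℵ₀ < κ := hucf.trans_le (Ordinal.cof_ord_le κ)
  set c : ℕ → Cardinal.{0} := fun n => (fun x : Cardinal => 2 ^ x)^[n] (a.card ⊔ ℵ₀) with hc
  have hsucc : ∀ n, c (n + 1) = 2 ^ c n := fun n => Function.iterate_succ_apply' _ _ _
  have hmono : ∀ n, c n < c (n + 1) := fun n => by
    rw [hsucc n]; exact Cardinal.cantor _
  have hcκ : ∀ n, c n < κ := by
    intro n; induction n with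
    | zero => exact max_lt (Cardinal.lt_ord.mp ha) haleph
    | succ n ih => rw [hsucc n]; exact hsl.two_power_lt ih
  set μ := ⨆ n, c n with hμ
  have hbdd := Cardinal.bddAbove_range c
  have hle : ∀ n, c n ≤ μ := fun n => le_ciSup hbdd n
  have hltμ : ∀ n, c n < μ := fun n => (hmono n).trans_le (hle (n + 1))
  have hSL : μ.IsStrongLimit := by
    constructor
    · intro h0
      have haleμ : ℵ₀ ≤ μ := le_sup_right.trans (hle 0)
      rw [h0] at haleμ
      exact Cardinal.aleph0_ne_zero (le_zero_iff.mp haleμ)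
    · intro x hx
      have : ∃ n, x < c n := by
        by_contra hall
        push_neg at hall
        exact absurd (ciSup_le hall) (not_le.mpr hx)
      obtain ⟨n, hn⟩ := this
      calc 2 ^ x ≤ 2 ^ c n := Cardinal.power_le_power_left two_ne_zero hn.le
        _ = c (n + 1) := (hsucc n).symm
        _ < μ := hltμ (n + 1)
  have hμκ : μ < κ := by
    refine Ordinal.iSup_lt ?_ hcκ
    rw [Cardinal.mk_nat]; exact hucf
  refine ⟨μ, hSL, ?_, Cardinal.ord_lt_ord.2 hμκ⟩
  rw [Cardinal.lt_ord]
  exact le_sup_left.trans_lt (hltμ 0)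

/-- if `{α < κ | 2^α = α⁺}` is co-stationary in the singular
strong limit `κ` of uncountable cofinality, then SCH fails stationarily often
below `κ`. -/
theorem stmt6 (κ : Cardinal.{0}) (hsl : κ.IsStrongLimit)
    (hucf : ℵ₀ < κ.ord.cof) (hsing : κ.ord.cof < κ)
    (hcostat :
      IsStatIn (Set.Iio κ.ord \ {o : Ordinal | 2 ^ o.card = Order.succ o.card}) κ.ord) :
    IsStatIn {o : Ordinal | o < κ.ord ∧
      Order.succ o.card * 2 ^ o.card.ord.cof < o.card ^ o.card.ord.cof} κ.ord := by
  intro C hC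
  have hκlim : Order.IsSuccLimit κ.ord := Cardinal.isSuccLimit_ord hsl.aleph0_le
  set ν : Ordinal.{0} := κ.ord.cof.ord with hνdef
  have hνκ : ν < κ.ord := Cardinal.ord_lt_ord.2 hsing
  obtain ⟨ι, f, hf, hι⟩ := Ordinal.exists_lsub_cof κ.ord
  -- unboundedness of the three kinds of points
  have hCub : ∀ a < κ.ord, ∃ c ∈ C, a < c ∧ c < κ.ord := by
    intro a ha
    obtain ⟨c, hc, hac⟩ := hC.2.1 (Order.succ a) (hκlim.succ_lt ha)
    exact ⟨c, hc, (Order.lt_succ a).trans_le hac, hC.1 hc⟩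
  have hfub : ∀ a < κ.ord, ∃ i, a < f i ∧ f i < κ.ord := by
    intro a ha
    have h1 : Order.succ a < Ordinal.lsub f := by rw [hf]; exact hκlim.succ_lt ha
    obtain ⟨i, hi⟩ := Ordinal.lt_lsub_iff.mp h1
    exact ⟨i, (Order.lt_succ a).trans_le hi, hf ▸ Ordinal.lt_lsub f i⟩
  have step : ∀ a, a < κ.ord → ∃ b, a < b ∧ b < κ.ord ∧
      (∃ c ∈ C, a < c ∧ c < b) ∧
      (∃ μ : Cardinal, μ.IsStrongLimit ∧ a < μ.ord ∧ μ.ord < b) ∧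
      (∃ i, a < f i ∧ f i < b) := by
    intro a ha
    obtain ⟨c, hcC, hac, hcκ⟩ := hCub a ha
    obtain ⟨μ, hμSL, hcμ, hμκ⟩ := aux_exists_strongLimit hsl hucf hcκ
    obtain ⟨i, hμi, hiκ⟩ := hfub μ.ord hμκ
    refine ⟨Order.succ (f i), ?_, hκlim.succ_lt hiκ, ⟨c, hcC, hac, ?_⟩,
      ⟨μ, hμSL, hac.trans hcμ, ?_⟩, ⟨i, (hac.trans hcμ).trans hμi, Order.lt_succ _⟩⟩
    · exact (hac.trans hcμ).trans (hμi.trans (Order.lt_succ _))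
    · exact hcμ.trans (hμi.trans (Order.lt_succ _))
    · exact hμi.trans (Order.lt_succ _)
  choose! F hF1 hF2 hF3 hF4 hF5 using step
  -- the club W
  set W : Set Ordinal.{0} := {o | ν < o ∧ o < κ.ord ∧
      (∀ b < o, ∃ c ∈ C, b < c ∧ c < o) ∧
      (∀ b < o, ∃ μ : Cardinal, μ.IsStrongLimit ∧ b < μ.ord ∧ μ.ord < o) ∧
      (∀ b < o, ∃ i, b < f i ∧ f i < o)} with hWdef
  have hW : IsClubIn W κ.ord := by
    refine ⟨fun o ho => ho.2.1, ?_, ?_⟩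
    · -- unbounded
      intro a ha
      set s : Ordinal := max (Order.succ a) (Order.succ ν) with hsdef
      have hs : s < κ.ord := max_lt (hκlim.succ_lt ha) (hκlim.succ_lt hνκ)
      set y : ℕ → Ordinal := fun n => F^[n] s with hydef
      have hy0 : y 0 = s := rfl
      have hysucc : ∀ n, y (n + 1) = F (y n) := fun n => Function.iterate_succ_apply' _ _ _
      have hyκ : ∀ n, y n < κ.ord := by
        intro n; induction n with
        | zero => exact hs
        | succ n ih => rw [hysucc n]; exact hF2 (y n) ih
      have hymono : ∀ n, y n < y (n + 1) := fun n => by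
        rw [hysucc n]; exact hF1 (y n) (hyκ n)
      set o : Ordinal := ⨆ n, y n with hodef
      have hoκ : o < κ.ord := by
        refine Ordinal.iSup_lt_of_lt_cof ?_ hyκ
        rw [Cardinal.mk_nat]; exact hucf
      have hyo : ∀ n, y n < o := fun n => (hymono n).trans_le (Ordinal.le_iSup y (n + 1))
      have hνo : ν < o := (Order.lt_succ ν).trans_le (le_max_right _ _ |>.trans (hyo 0).le)
      refine ⟨o, ⟨hνo, hoκ, ?_, ?_, ?_⟩, ((Order.lt_succ a).trans_le
        ((le_max_left _ _).trans (hyo 0).le)).le⟩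
      · intro b hb
        obtain ⟨n, hn⟩ := Ordinal.lt_iSup_iff.mp hb
        obtain ⟨c, hcC, h1, h2⟩ := hF3 (y n) (hyκ n)
        exact ⟨c, hcC, hn.trans h1, (h2.trans_eq (hysucc n).symm).trans (hyo (n + 1))⟩
      · intro b hb
        obtain ⟨n, hn⟩ := Ordinal.lt_iSup_iff.mp hb
        obtain ⟨μ, hμSL, h1, h2⟩ := hF4 (y n) (hyκ n)
        exact ⟨μ, hμSL, hn.trans h1, (h2.trans_eq (hysucc n).symm).trans (hyo (n + 1))⟩
      · intro b hb
        obtain ⟨n, hn⟩ := Ordinal.lt_iSup_iff.mp hb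
        obtain ⟨i, h1, h2⟩ := hF5 (y n) (hyκ n)
        exact ⟨i, hn.trans h1, (h2.trans_eq (hysucc n).symm).trans (hyo (n + 1))⟩
    · -- closed
      rintro a ha ⟨b0, hb0W, hb0a⟩ hdense
      refine ⟨hb0W.1.trans hb0a, ha, ?_, ?_, ?_⟩
      · intro b hb
        obtain ⟨w, hwW, hbw, hwa⟩ := hdense b hb
        obtain ⟨c, hcC, h1, h2⟩ := hwW.2.2.1 b hbw
        exact ⟨c, hcC, h1, h2.trans hwa⟩
      · intro b hb
        obtain ⟨w, hwW, hbw, hwa⟩ := hdense b hb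
        obtain ⟨μ, hμSL, h1, h2⟩ := hwW.2.2.2.1 b hbw
        exact ⟨μ, hμSL, h1, h2.trans hwa⟩
      · intro b hb
        obtain ⟨w, hwW, hbw, hwa⟩ := hdense b hb
        obtain ⟨i, h1, h2⟩ := hwW.2.2.2.2 b hbw
        exact ⟨i, h1, h2.trans hwa⟩
  obtain ⟨o, hoT, hoW⟩ := hcostat W hW
  have hoκ : o < κ.ord := hoT.1
  have hνo : ν < o := hoW.1
  -- o ∈ C
  have hoC : o ∈ C := by
    refine hC.2.2 o hoκ ?_ ?_
    · obtain ⟨c, hcC, _, h2⟩ := hoW.2.2.1 ν hνo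
      exact ⟨c, hcC, h2⟩
    · intro b hb
      obtain ⟨c, hcC, h1, h2⟩ := hoW.2.2.1 b hb
      exact ⟨c, hcC, h1, h2⟩
  set l : Cardinal := o.card with hldef
  -- o is a (strong limit) cardinal
  have hcardord : l.ord = o := by
    rcases lt_or_eq_of_le (Cardinal.ord_card_le o) with h | h
    · obtain ⟨μ, hμSL, h1, h2⟩ := hoW.2.2.2.1 l.ord h
      have h3 : μ ≤ l := by
        have := Ordinal.card_le_card h2.le
        rwa [Cardinal.card_ord] at this
      exact absurd ((Cardinal.ord_le_ord.2 h3).trans_lt h1) (lt_irrefl _)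
    · exact h
  have hSL : l.IsStrongLimit := by
    constructor
    · intro h0
      obtain ⟨μ, hμSL, h1, h2⟩ := hoW.2.2.2.1 ν hνo
      have : μ < l := by rwa [← hcardord, Cardinal.ord_lt_ord] at h2
      rw [h0] at this
      exact hμSL.ne_zero (le_zero_iff.mp this.le)
    · intro x hx
      have hxo : x.ord < o := by rw [← hcardord]; exact Cardinal.ord_lt_ord.2 hx
      obtain ⟨μ, hμSL, h1, h2⟩ := hoW.2.2.2.1 x.ord hxo
      have hxμ : x < μ := by rwa [Cardinal.ord_lt_ord] at h1
      have hμl : μ < l := by rwa [← hcardord, Cardinal.ord_lt_ord] at h2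
      exact (hμSL.two_power_lt hxμ).trans hμl
  -- cofinality of o is at most cof κ
  have hcof : o.cof ≤ κ.ord.cof := by
    have hlsub : Ordinal.lsub (fun i : {i : ι // f i < o} => f i.1) = o := by
      apply le_antisymm
      · exact Ordinal.lsub_le fun i => i.2
      · by_contra hlt
        push_neg at hlt
        obtain ⟨i, h1, h2⟩ := hoW.2.2.2.2 _ hlt
        exact absurd (Ordinal.lt_lsub (fun i : {i : ι // f i < o} => f i.1) ⟨i, h2⟩)
          (not_lt.mpr h1.le)
    calc o.cof = (Ordinal.lsub fun i : {i : ι // f i < o} => f i.1).cof := by rw [hlsub]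
      _ ≤ #{i : ι // f i < o} := Ordinal.cof_lsub_le _
      _ ≤ #ι := Cardinal.mk_subtype_le _
      _ = κ.ord.cof := hι
  have hνl : κ.ord.cof < l := by
    rw [← Cardinal.ord_lt_ord, hcardord]; exact hνo
  have hcof' : l.ord.cof < l := by
    rw [hcardord]; exact hcof.trans_lt hνl
  -- the arithmetic
  have hTne : ¬(2 ^ l = Order.succ l) := hoT.2
  have h1 : Order.succ l < 2 ^ l :=
    lt_of_le_of_ne (Order.succ_le_of_lt (Cardinal.cantor l)) (Ne.symm hTne)
  have h2 : Order.succ l < l ^ l.ord.cof := h1.trans_le (aux_two_power_le hSL)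
  have h3 : Order.succ l * 2 ^ l.ord.cof = Order.succ l := by
    refine Cardinal.mul_eq_left (hSL.aleph0_le.trans (Order.le_succ l)) ?_ ?_
    · exact (hSL.two_power_lt hcof').le.trans (Order.le_succ l)
    · exact Cardinal.power_ne_zero _ two_ne_zero
  exact ⟨o, ⟨hoκ, by rw [show o.card = l from rfl, h3]; exact h2⟩, hoC⟩
end
end
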